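/- Let (X, μ) be a measure space, φ an Orlicz function satisfying the Δ₂-condition, f ∈ L_φ and (f_n) ⊆ L_φ with ‖f_n‖_φ → ‖f‖_φ and f_n → f in measure. Then ‖f_n − f‖_φ → 0. (Kadec–Klee property for convergence in measure of commutative Orlicz spaces.) -/

import Mathlib

open MeasureTheory Filter ENNReal

/-- The Orlicz modular `ρ(f) = ∫ φ(|f|) dμ`. -/
noncomputable def orliczModular (φ : ℝ → ℝ) {X : Type*} [MeasurableSpace X]
    (μ : Measure X) (f : X → ℝ) : ℝ≥0∞ :=
  ∫⁻ x, ENNReal.ofReal (φ |f x|) ∂μ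

/-- The Luxemburg norm `‖f‖_φ = inf {c > 0 : ∫ φ(|f|/c) dμ ≤ 1}`. -/
noncomputable def luxemburgNorm (φ : ℝ → ℝ) {X : Type*} [MeasurableSpace X]
    (μ : Measure X) (f : X → ℝ) : ℝ :=
  sInf {c : ℝ | 0 < c ∧ orliczModular φ μ (fun x => f x / c) ≤ 1}

/-- Membership in the Orlicz space `L_φ`. -/
def MemOrlicz (φ : ℝ → ℝ) {X : Type*} [MeasurableSpace X]
    (μ : Measure X) (f : X → ℝ) : Prop :=
  Measurable f ∧ ∃ lam > (0 : ℝ), orliczModular φ μ (fun x => lam * f x) < ⊤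

section KKAux

variable {X : Type*} [MeasurableSpace X] {μ : Measure X} {φ : ℝ → ℝ}

lemma kk_phi_nonneg (hmono : MonotoneOn φ (Set.Ici 0)) (h0 : φ 0 = 0)
    {t : ℝ} (ht : 0 ≤ t) : 0 ≤ φ t := by
  have := hmono (Set.self_mem_Ici) (Set.mem_Ici.2 ht) ht
  simpa [h0] using this

lemma kk_phi_abs_cont (hcont : ContinuousOn φ (Set.Ici 0)) :
    Continuous fun t : ℝ => φ |t| :=
  hcont.comp_continuous continuous_abs fun x => Set.mem_Ici.2 (abs_nonneg x)

lemma kk_mod_meas (hcont : ContinuousOn φ (Set.Ici 0)) {g : X → ℝ} (hg : Measurable g) :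
    Measurable fun x => ENNReal.ofReal (φ |g x|) :=
  ENNReal.measurable_ofReal.comp (((kk_phi_abs_cont hcont).measurable).comp hg)

lemma kk_mod_mono (hmono : MonotoneOn φ (Set.Ici 0)) {g h : X → ℝ}
    (hle : ∀ x, |g x| ≤ |h x|) :
    orliczModular φ μ g ≤ orliczModular φ μ h :=
  lintegral_mono fun x => ENNReal.ofReal_le_ofReal
    (hmono (Set.mem_Ici.2 (abs_nonneg _)) (Set.mem_Ici.2 (abs_nonneg _)) (hle x))

lemma kk_key_pointwise (hconv : ConvexOn ℝ (Set.Ici 0) φ) (hmono : MonotoneOn φ (Set.Ici 0))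
    (h0 : φ 0 = 0) {K : ℝ}
    (hKΔ : ∀ u, 0 ≤ u → φ (2 * u) ≤ K * φ u) (p q : ℝ) :
    φ |p - q| ≤ (K / 2) * (φ |p| + φ |q|) := by
  have h1 : φ |p - q| ≤ φ (|p| + |q|) :=
    hmono (Set.mem_Ici.2 (abs_nonneg _))
      (Set.mem_Ici.2 (by positivity)) (abs_sub _ _)
  have h2 : φ (|p| + |q|) ≤ (1/2) * φ (2 * |p|) + (1/2) * φ (2 * |q|) := by
    have hhalf : (1/2 : ℝ) * (2 * |p|) + (1/2) * (2 * |q|) = |p| + |q| := by ring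
    calc φ (|p| + |q|) = φ ((1/2) * (2 * |p|) + (1/2) * (2 * |q|)) := by rw [hhalf]
    _ ≤ (1/2) * φ (2 * |p|) + (1/2) * φ (2 * |q|) := by
        have := hconv.2 (Set.mem_Ici.2 (by positivity : (0:ℝ) ≤ 2 * |p|))
          (Set.mem_Ici.2 (by positivity : (0:ℝ) ≤ 2 * |q|))
          (by norm_num : (0:ℝ) ≤ 1/2) (by norm_num : (0:ℝ) ≤ 1/2) (by norm_num)
        simpa [smul_eq_mul] using this
  have h3 : φ (2 * |p|) ≤ K * φ |p| := hKΔ _ (abs_nonneg _)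
  have h4 : φ (2 * |q|) ≤ K * φ |q| := hKΔ _ (abs_nonneg _)
  nlinarith [h1, h2, h3, h4]

lemma kk_mod_double (hmono : MonotoneOn φ (Set.Ici 0))
    (h0 : φ 0 = 0) {K : ℝ} (hK1 : 1 ≤ K)
    (hKΔ : ∀ u, 0 ≤ u → φ (2 * u) ≤ K * φ u) (g : X → ℝ) :
    orliczModular φ μ (fun x => 2 * g x) ≤ ENNReal.ofReal K * orliczModular φ μ g := by
  have hK0 : (0:ℝ) ≤ K := zero_le_one.trans hK1
  calc orliczModular φ μ (fun x => 2 * g x)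
      ≤ ∫⁻ x, ENNReal.ofReal K * ENNReal.ofReal (φ |g x|) ∂μ := by
        apply lintegral_mono
        intro x
        show ENNReal.ofReal (φ |2 * g x|) ≤ ENNReal.ofReal K * ENNReal.ofReal (φ |g x|)
        have habs : |2 * g x| = 2 * |g x| := by rw [abs_mul]; norm_num
        rw [← ENNReal.ofReal_mul hK0]
        exact ENNReal.ofReal_le_ofReal (by rw [habs]; exact hKΔ _ (abs_nonneg _))
    _ = ENNReal.ofReal K * orliczModular φ μ g :=
        lintegral_const_mul' _ _ ENNReal.ofReal_ne_top

lemma kk_mod_pow (hmono : MonotoneOn φ (Set.Ici 0))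
    (h0 : φ 0 = 0) {K : ℝ} (hK1 : 1 ≤ K)
    (hKΔ : ∀ u, 0 ≤ u → φ (2 * u) ≤ K * φ u) (m : ℕ) (g : X → ℝ) :
    orliczModular φ μ (fun x => 2 ^ m * g x) ≤
      (ENNReal.ofReal K) ^ m * orliczModular φ μ g := by
  induction m generalizing g with
  | zero => simp
  | succ m ih =>
      have heq : (fun x => (2:ℝ) ^ (m+1) * g x) = fun x => 2 ^ m * (2 * g x) := by
        funext x; ring
      rw [heq]
      calc orliczModular φ μ (fun x => 2 ^ m * (2 * g x))
          ≤ (ENNReal.ofReal K) ^ m * orliczModular φ μ (fun x => 2 * g x) :=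
            ih (fun x => 2 * g x)
        _ ≤ (ENNReal.ofReal K) ^ m * (ENNReal.ofReal K * orliczModular φ μ g) := by
            gcongr
            exact kk_mod_double hmono h0 hK1 hKΔ g
        _ = (ENNReal.ofReal K) ^ (m+1) * orliczModular φ μ g := by ring

/-- small scaling: `ρ(t g) ≤ |t| ρ(g)` for `|t| ≤ 1`. -/
lemma kk_mod_small (hconv : ConvexOn ℝ (Set.Ici 0) φ) (h0 : φ 0 = 0)
    {t : ℝ} (ht : |t| ≤ 1) (g : X → ℝ) :
    orliczModular φ μ (fun x => t * g x) ≤ ENNReal.ofReal |t| * orliczModular φ μ g := by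
  calc orliczModular φ μ (fun x => t * g x)
      ≤ ∫⁻ x, ENNReal.ofReal |t| * ENNReal.ofReal (φ |g x|) ∂μ := by
        apply lintegral_mono
        intro x
        show ENNReal.ofReal (φ |t * g x|) ≤ ENNReal.ofReal |t| * ENNReal.ofReal (φ |g x|)
        rw [← ENNReal.ofReal_mul (abs_nonneg t)]
        apply ENNReal.ofReal_le_ofReal
        have habs : |t * g x| = |t| * |g x| := abs_mul _ _
        have := hconv.2 (Set.mem_Ici.2 (abs_nonneg (g x))) (Set.self_mem_Ici)
          (abs_nonneg t) (by linarith : (0:ℝ) ≤ 1 - |t|) (by ring)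
        simpa [smul_eq_mul, h0, habs] using this
    _ = ENNReal.ofReal |t| * orliczModular φ μ g :=
        lintegral_const_mul' _ _ ENNReal.ofReal_ne_top

/-- splitting: `ρ(p + q) ≤ ρ(2p) + ρ(2q)`. -/
lemma kk_mod_add (hconv : ConvexOn ℝ (Set.Ici 0) φ) (hmono : MonotoneOn φ (Set.Ici 0))
    (hcont : ContinuousOn φ (Set.Ici 0)) (h0 : φ 0 = 0)
    {p : X → ℝ} (q : X → ℝ) (hp : Measurable p) :
    orliczModular φ μ (fun x => p x + q x) ≤
      orliczModular φ μ (fun x => 2 * p x) + orliczModular φ μ (fun x => 2 * q x) := by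
  have hptw : ∀ x, ENNReal.ofReal (φ |p x + q x|) ≤
      ENNReal.ofReal (φ |2 * p x|) + ENNReal.ofReal (φ |2 * q x|) := by
    intro x
    have hnn : ∀ t : ℝ, 0 ≤ φ |t| := fun t => kk_phi_nonneg hmono h0 (abs_nonneg t)
    rw [← ENNReal.ofReal_add (hnn _) (hnn _)]
    apply ENNReal.ofReal_le_ofReal
    have h1 : φ |p x + q x| ≤ φ (|p x| + |q x|) :=
      hmono (Set.mem_Ici.2 (abs_nonneg _)) (Set.mem_Ici.2 (by positivity))
        (abs_add_le _ _)
    have hhalf : (1/2 : ℝ) * (2 * |p x|) + (1/2) * (2 * |q x|) = |p x| + |q x| := by ring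
    have h2 : φ (|p x| + |q x|) ≤ (1/2) * φ (2 * |p x|) + (1/2) * φ (2 * |q x|) := by
      calc φ (|p x| + |q x|) = φ ((1/2) * (2 * |p x|) + (1/2) * (2 * |q x|)) := by
            rw [hhalf]
      _ ≤ (1/2) * φ (2 * |p x|) + (1/2) * φ (2 * |q x|) := by
          have := hconv.2 (Set.mem_Ici.2 (by positivity : (0:ℝ) ≤ 2 * |p x|))
            (Set.mem_Ici.2 (by positivity : (0:ℝ) ≤ 2 * |q x|))
            (by norm_num : (0:ℝ) ≤ 1/2) (by norm_num : (0:ℝ) ≤ 1/2) (by norm_num)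
          simpa [smul_eq_mul] using this
    have h3 : |2 * p x| = 2 * |p x| := by rw [abs_mul]; norm_num
    have h4 : |2 * q x| = 2 * |q x| := by rw [abs_mul]; norm_num
    rw [h3, h4]
    nlinarith [h1, h2, kk_phi_nonneg hmono h0 (show (0:ℝ) ≤ 2 * |p x| by positivity),
      kk_phi_nonneg hmono h0 (show (0:ℝ) ≤ 2 * |q x| by positivity)]
  calc orliczModular φ μ (fun x => p x + q x)
      ≤ ∫⁻ x, (ENNReal.ofReal (φ |2 * p x|) + ENNReal.ofReal (φ |2 * q x|)) ∂μ :=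
        lintegral_mono hptw
    _ = orliczModular φ μ (fun x => 2 * p x) + orliczModular φ μ (fun x => 2 * q x) :=
        lintegral_add_left (kk_mod_meas hcont (measurable_const.mul hp)) _

lemma kk_mod_finite (hconv : ConvexOn ℝ (Set.Ici 0) φ) (hmono : MonotoneOn φ (Set.Ici 0))
    (h0 : φ 0 = 0) {K : ℝ} (hK1 : 1 ≤ K)
    (hKΔ : ∀ u, 0 ≤ u → φ (2 * u) ≤ K * φ u) {g : X → ℝ}
    (hg : MemOrlicz φ μ g) (t : ℝ) :
    orliczModular φ μ (fun x => t * g x) < ⊤ := by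
  obtain ⟨hgm, lam, hlam, hfin⟩ := hg
  obtain ⟨m, hm⟩ := pow_unbounded_of_one_lt (|t| / lam) (one_lt_two (α := ℝ))
  have hmt : |t| ≤ 2 ^ m * lam := by
    rw [div_lt_iff₀ hlam] at hm
    linarith
  calc orliczModular φ μ (fun x => t * g x)
      ≤ orliczModular φ μ (fun x => 2 ^ m * (lam * g x)) := by
        apply kk_mod_mono hmono
        intro x
        rw [abs_mul, abs_mul, abs_mul]
        have h2 : |(2:ℝ) ^ m| = 2 ^ m := abs_of_pos (by positivity)
        have hl : |lam| = lam := abs_of_pos hlam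
        rw [h2, hl, ← mul_assoc]
        exact mul_le_mul_of_nonneg_right hmt (abs_nonneg _)
    _ ≤ (ENNReal.ofReal K) ^ m * orliczModular φ μ (fun x => lam * g x) :=
        kk_mod_pow hmono h0 hK1 hKΔ m _
    _ < ⊤ := ENNReal.mul_lt_top
        (pow_ne_top ENNReal.ofReal_ne_top).lt_top hfin

/-- Dominated convergence in the scaling parameter. -/
lemma kk_mod_tendsto (hmono : MonotoneOn φ (Set.Ici 0)) (hcont : ContinuousOn φ (Set.Ici 0))
    {g : X → ℝ} (hg : Measurable g) {ts : ℕ → ℝ} {t₀ T : ℝ}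
    (hts : ∀ j, |ts j| ≤ T) (hlim : Tendsto ts atTop (nhds t₀))
    (hfin : orliczModular φ μ (fun x => T * g x) ≠ ⊤) :
    Tendsto (fun j => orliczModular φ μ (fun x => ts j * g x)) atTop
      (nhds (orliczModular φ μ (fun x => t₀ * g x))) := by
  have hT0 : 0 ≤ T := (abs_nonneg _).trans (hts 0)
  apply tendsto_lintegral_of_dominated_convergence
    (fun x => ENNReal.ofReal (φ |T * g x|))
  · intro j
    exact kk_mod_meas hcont (measurable_const.mul hg)
  · intro j
    apply Filter.Eventually.of_forall
    intro x
    apply ENNReal.ofReal_le_ofReal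
    apply hmono (Set.mem_Ici.2 (abs_nonneg _)) (Set.mem_Ici.2 (abs_nonneg _))
    rw [abs_mul, abs_mul, abs_of_nonneg hT0]
    exact mul_le_mul_of_nonneg_right (hts j) (abs_nonneg _)
  · exact hfin
  · apply Filter.Eventually.of_forall
    intro x
    have hc : Continuous fun s : ℝ => ENNReal.ofReal (φ |s * g x|) :=
      ENNReal.continuous_ofReal.comp
        ((kk_phi_abs_cont hcont).comp (continuous_mul_right (g x)))
    exact (hc.tendsto t₀).comp hlim

lemma kk_lux_nonneg (g : X → ℝ) : 0 ≤ luxemburgNorm φ μ g :=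
  Real.sInf_nonneg fun _ hc => hc.1.le

lemma kk_lux_le {g : X → ℝ} {c : ℝ} (hc : 0 < c)
    (h : orliczModular φ μ (fun x => g x / c) ≤ 1) : luxemburgNorm φ μ g ≤ c :=
  csInf_le ⟨0, fun _ hx => hx.1.le⟩ ⟨hc, h⟩

lemma kk_div_form (g : X → ℝ) (c : ℝ) :
    (fun x => g x / c) = fun x => (1 / c) * g x := by
  funext x; rw [one_div, inv_mul_eq_div]

lemma kk_setS_nonempty (hconv : ConvexOn ℝ (Set.Ici 0) φ) (hmono : MonotoneOn φ (Set.Ici 0))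
    (h0 : φ 0 = 0) {K : ℝ} (hK1 : 1 ≤ K)
    (hKΔ : ∀ u, 0 ≤ u → φ (2 * u) ≤ K * φ u) {g : X → ℝ} (hg : MemOrlicz φ μ g) :
    Set.Nonempty {c : ℝ | 0 < c ∧ orliczModular φ μ (fun x => g x / c) ≤ 1} := by
  have hfin : orliczModular φ μ (fun x => (1:ℝ) * g x) < ⊤ :=
    kk_mod_finite hconv hmono h0 hK1 hKΔ hg 1
  have hfin' : orliczModular φ μ g < ⊤ := by
    have : (fun x => (1:ℝ) * g x) = g := by funext x; ring
    rwa [this] at hfin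
  set R : ℝ := (orliczModular φ μ g).toReal + 1 with hR
  have hR1 : 1 ≤ R := by
    have := ENNReal.toReal_nonneg (a := orliczModular φ μ g)
    simp only [hR]; linarith
  have hR0 : 0 < R := lt_of_lt_of_le one_pos hR1
  refine ⟨R, hR0, ?_⟩
  rw [kk_div_form]
  have h1T : |(1/R : ℝ)| ≤ 1 := by
    rw [abs_of_pos (by positivity), div_le_one hR0]
    exact hR1
  calc orliczModular φ μ (fun x => (1/R) * g x)
      ≤ ENNReal.ofReal |1/R| * orliczModular φ μ g := kk_mod_small hconv h0 h1T g
    _ ≤ ENNReal.ofReal (1/R) * ENNReal.ofReal R := by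
        gcongr
        · rw [abs_of_pos (by positivity)]
        · rw [← ENNReal.ofReal_toReal hfin'.ne]
          apply ENNReal.ofReal_le_ofReal
          simp only [hR]; linarith
    _ = ENNReal.ofReal ((1/R) * R) := (ENNReal.ofReal_mul (by positivity)).symm
    _ ≤ 1 := by
        rw [one_div, inv_mul_cancel₀ hR0.ne']
        simp

lemma kk_lux_lt_imp (hconv : ConvexOn ℝ (Set.Ici 0) φ) (hmono : MonotoneOn φ (Set.Ici 0))
    (h0 : φ 0 = 0) {K : ℝ} (hK1 : 1 ≤ K)
    (hKΔ : ∀ u, 0 ≤ u → φ (2 * u) ≤ K * φ u) {g : X → ℝ} (hg : MemOrlicz φ μ g)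
    {ε : ℝ} (hε : 0 < ε) (h : luxemburgNorm φ μ g < ε) :
    orliczModular φ μ (fun x => g x / ε) ≤ 1 := by
  obtain ⟨c, ⟨hc0, hc⟩, hcε⟩ :=
    exists_lt_of_csInf_lt (kk_setS_nonempty hconv hmono h0 hK1 hKΔ hg) h
  refine le_trans ?_ hc
  apply kk_mod_mono hmono
  intro x
  rw [abs_div, abs_div, abs_of_pos hε, abs_of_pos hc0]
  exact div_le_div_of_nonneg_left (abs_nonneg _) hc0 hcε.le

/-- Under `Δ₂` the modular at the Luxemburg norm equals one (positive norm case). -/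
lemma kk_norm_modular_eq_one (hconv : ConvexOn ℝ (Set.Ici 0) φ)
    (hmono : MonotoneOn φ (Set.Ici 0)) (hcont : ContinuousOn φ (Set.Ici 0))
    (h0 : φ 0 = 0) {K : ℝ} (hK1 : 1 ≤ K)
    (hKΔ : ∀ u, 0 ≤ u → φ (2 * u) ≤ K * φ u) {g : X → ℝ} (hg : MemOrlicz φ μ g)
    (ha : 0 < luxemburgNorm φ μ g) :
    orliczModular φ μ (fun x => g x / luxemburgNorm φ μ g) = 1 := by
  set a := luxemburgNorm φ μ g with haeq
  have hSne := kk_setS_nonempty hconv hmono h0 hK1 hKΔ hg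
  have hbdd : BddBelow {c : ℝ | 0 < c ∧ orliczModular φ μ (fun x => g x / c) ≤ 1} :=
    ⟨0, fun _ hx => hx.1.le⟩
  -- every `c > a` has modular at most one
  have hgt : ∀ c : ℝ, a < c → orliczModular φ μ (fun x => g x / c) ≤ 1 := by
    intro c hc
    obtain ⟨c', ⟨hc'0, hc'⟩, hc'c⟩ := exists_lt_of_csInf_lt hSne hc
    refine le_trans ?_ hc'
    apply kk_mod_mono hmono
    intro x
    rw [abs_div, abs_div, abs_of_pos (ha.trans hc), abs_of_pos hc'0]
    exact div_le_div_of_nonneg_left (abs_nonneg _) hc'0 hc'c.le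
  have hfin : ∀ t : ℝ, orliczModular φ μ (fun x => t * g x) ≠ ⊤ := fun t =>
    (kk_mod_finite hconv hmono h0 hK1 hKΔ hg t).ne
  -- upper bound: ρ(g/a) ≤ 1
  have hle : orliczModular φ μ (fun x => g x / a) ≤ 1 := by
    rw [kk_div_form]
    set ts : ℕ → ℝ := fun j => 1 / (a + 1 / (j + 1)) with hts
    have htsle : ∀ j, |ts j| ≤ 1 / a := by
      intro j
      have hpos : (0:ℝ) < a + 1 / ((j:ℝ) + 1) := by positivity
      rw [hts, abs_of_pos (by positivity)]
      exact one_div_le_one_div_of_le ha (le_add_of_nonneg_right (by positivity))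
    have htslim : Tendsto ts atTop (nhds (1 / a)) := by
      have h1 : Tendsto (fun j : ℕ => a + 1 / ((j:ℝ) + 1)) atTop (nhds (a + 0)) :=
        tendsto_const_nhds.add tendsto_one_div_add_atTop_nhds_zero_nat
      rw [add_zero] at h1
      exact (tendsto_const_nhds.div h1 ha.ne')
    have htd := kk_mod_tendsto (μ := μ) hmono hcont hg.1 htsle htslim (hfin (1/a))
    apply le_of_tendsto htd
    apply Filter.Eventually.of_forall
    intro j
    have hlt : a < a + 1 / ((j:ℝ) + 1) := lt_add_of_pos_right a (by positivity)
    have := hgt (a + 1 / ((j:ℝ) + 1)) hlt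
    rw [kk_div_form] at this
    exact this
  -- lower bound: ρ(g/a) = 1
  rcases lt_or_eq_of_le hle with hlt | heq
  · exfalso
    rw [kk_div_form] at hlt
    set ts : ℕ → ℝ := fun j => 1 / a + 1 / (j + 1) with hts
    have htsle : ∀ j, |ts j| ≤ 1 / a + 1 := by
      intro j
      rw [hts, abs_of_pos (by positivity)]
      have : 1 / ((j:ℝ) + 1) ≤ 1 := by
        rw [div_le_one (by positivity)]
        have : (0:ℝ) ≤ (j:ℝ) := Nat.cast_nonneg j
        linarith
      simp only
      linarith
    have htslim : Tendsto ts atTop (nhds (1 / a)) := by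
      have h1 : Tendsto (fun j : ℕ => 1 / a + 1 / ((j:ℝ) + 1)) atTop (nhds (1/a + 0)) :=
        tendsto_const_nhds.add tendsto_one_div_add_atTop_nhds_zero_nat
      rwa [add_zero] at h1
    have htd := kk_mod_tendsto (μ := μ) hmono hcont hg.1 htsle htslim (hfin (1/a + 1))
    obtain ⟨j, hj⟩ := ((tendsto_order.1 htd).2 1 hlt).exists
    have htj_pos : 0 < ts j := by rw [hts]; positivity
    have h1a_lt : 1 / a < ts j := by
      rw [hts]
      exact lt_add_of_pos_right _ (by positivity)
    have hcj : 1 / ts j < a := by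
      have := one_div_lt_one_div_of_lt (by positivity : (0:ℝ) < 1 / a) h1a_lt
      rwa [one_div_one_div] at this
    have hmem : 1 / ts j ∈ {c : ℝ | 0 < c ∧ orliczModular φ μ (fun x => g x / c) ≤ 1} := by
      refine ⟨by positivity, ?_⟩
      rw [kk_div_form, one_div_one_div]
      exact hj.le
    have h5 : a ≤ 1 / ts j := csInf_le hbdd hmem
    linarith
  · exact heq

lemma kk_lux_congr_ae {g h : X → ℝ} (hgh : g =ᵐ[μ] h) :
    luxemburgNorm φ μ g = luxemburgNorm φ μ h := by
  unfold luxemburgNorm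
  congr 1
  ext c
  have heq : orliczModular φ μ (fun x => g x / c) =
      orliczModular φ μ (fun x => h x / c) := by
    apply lintegral_congr_ae
    filter_upwards [hgh] with x hx
    rw [hx]
  rw [Set.mem_setOf_eq, Set.mem_setOf_eq, heq]

/-- The Brezis–Lieb type lemma: if the modulars are all one and `w_k → v` a.e.
then the modular of the difference tends to zero. -/
lemma kk_brezis_lieb (hconv : ConvexOn ℝ (Set.Ici 0) φ) (hmono : MonotoneOn φ (Set.Ici 0))
    (hcont : ContinuousOn φ (Set.Ici 0)) (h0 : φ 0 = 0) {K : ℝ} (hK1 : 1 ≤ K)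
    (hKΔ : ∀ u, 0 ≤ u → φ (2 * u) ≤ K * φ u)
    {w : ℕ → X → ℝ} {v : X → ℝ} (hwm : ∀ k, Measurable (w k)) (hvm : Measurable v)
    (hw1 : ∀ k, orliczModular φ μ (w k) = 1) (hv1 : orliczModular φ μ v = 1)
    (hae : ∀ᵐ x ∂μ, Tendsto (fun k => w k x) atTop (nhds (v x))) :
    Tendsto (fun k => orliczModular φ μ (fun x => w k x - v x)) atTop (nhds 0) := by
  have hK0 : (0:ℝ) < K := lt_of_lt_of_le one_pos hK1
  have hphinn : ∀ t : ℝ, 0 ≤ φ |t| := fun t => kk_phi_nonneg hmono h0 (abs_nonneg t)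
  -- pointwise key inequality in ℝ≥0∞
  have key : ∀ p q : ℝ, ENNReal.ofReal (φ |p - q|) ≤
      ENNReal.ofReal (K/2) * (ENNReal.ofReal (φ |p|) + ENNReal.ofReal (φ |q|)) := by
    intro p q
    rw [← ENNReal.ofReal_add (hphinn p) (hphinn q), ← ENNReal.ofReal_mul (by positivity)]
    exact ENNReal.ofReal_le_ofReal (kk_key_pointwise hconv hmono h0 hKΔ p q)
  set A : ℕ → X → ℝ≥0∞ := fun k x =>
    ENNReal.ofReal (K/2) * (ENNReal.ofReal (φ |w k x|) + ENNReal.ofReal (φ |v x|)) with hA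
  set B : ℕ → ℝ≥0∞ := fun k => orliczModular φ μ (fun x => w k x - v x) with hB
  have hAmeas : ∀ k, Measurable (A k) := fun k =>
    ((kk_mod_meas hcont (hwm k)).add (kk_mod_meas hcont hvm)).const_mul _
  have hBmeas : ∀ k, Measurable fun x => ENNReal.ofReal (φ |w k x - v x|) := fun k =>
    kk_mod_meas hcont ((hwm k).sub hvm)
  have hhalf2 : ENNReal.ofReal (K/2) * 2 = ENNReal.ofReal K := by
    rw [show (2:ℝ≥0∞) = ENNReal.ofReal 2 by simp, ← ENNReal.ofReal_mul (by positivity)]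
    norm_num
  have hAint : ∀ k, ∫⁻ x, A k x ∂μ = ENNReal.ofReal K := by
    intro k
    have e1 : (∫⁻ x, ENNReal.ofReal (φ |w k x|) ∂μ) = 1 := hw1 k
    have e2 : (∫⁻ x, ENNReal.ofReal (φ |v x|) ∂μ) = 1 := hv1
    rw [hA]
    simp only
    rw [lintegral_const_mul' _ _ ENNReal.ofReal_ne_top,
      lintegral_add_left (kk_mod_meas hcont (hwm k)), e1, e2, one_add_one_eq_two]
    exact hhalf2
  have hBle : ∀ k, B k ≤ ENNReal.ofReal K := by
    intro k
    rw [← hAint k]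
    exact lintegral_mono fun x => key _ _
  have hsub : ∀ k, ∫⁻ x, (A k x - ENNReal.ofReal (φ |w k x - v x|)) ∂μ =
      ENNReal.ofReal K - B k := by
    intro k
    rw [lintegral_sub (hBmeas k)
      (((hBle k).trans_lt ENNReal.ofReal_lt_top).ne)
      (Filter.Eventually.of_forall fun x => key (w k x) (v x)), hAint k]
    rfl
  -- pointwise a.e. limit of the integrand
  have haelim : ∀ᵐ x ∂μ, Tendsto
      (fun k => A k x - ENNReal.ofReal (φ |w k x - v x|)) atTop
      (nhds (ENNReal.ofReal K * ENNReal.ofReal (φ |v x|))) := by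
    filter_upwards [hae] with x hx
    have hcont1 : Continuous fun s : ℝ => ENNReal.ofReal (φ |s|) :=
      ENNReal.continuous_ofReal.comp (kk_phi_abs_cont hcont)
    have h1 : Tendsto (fun k => ENNReal.ofReal (φ |w k x|)) atTop
        (nhds (ENNReal.ofReal (φ |v x|))) := (hcont1.tendsto _).comp hx
    have h2 : Tendsto (fun k => ENNReal.ofReal (φ |w k x - v x|)) atTop
        (nhds (ENNReal.ofReal (φ |(0:ℝ)|))) := by
      have hx0 : Tendsto (fun k => w k x - v x) atTop (nhds 0) := by
        simpa using hx.sub (tendsto_const_nhds (x := v x))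
      exact (hcont1.tendsto _).comp hx0
    rw [show |(0:ℝ)| = 0 from abs_zero, h0, ENNReal.ofReal_zero] at h2
    have hAlim : Tendsto (fun k => A k x) atTop
        (nhds (ENNReal.ofReal (K/2) *
          (ENNReal.ofReal (φ |v x|) + ENNReal.ofReal (φ |v x|)))) :=
      ENNReal.Tendsto.const_mul (h1.add tendsto_const_nhds)
        (Or.inr ENNReal.ofReal_ne_top)
    have heq : ENNReal.ofReal (K/2) *
        (ENNReal.ofReal (φ |v x|) + ENNReal.ofReal (φ |v x|)) =
        ENNReal.ofReal K * ENNReal.ofReal (φ |v x|) := by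
      rw [← two_mul, ← mul_assoc, mul_comm (ENNReal.ofReal (K/2)) 2, mul_comm 2, hhalf2]
    rw [heq] at hAlim
    have hsublim := ENNReal.Tendsto.sub hAlim h2
      (Or.inl (ENNReal.mul_lt_top ENNReal.ofReal_lt_top ENNReal.ofReal_lt_top).ne)
    simpa using hsublim
  -- Fatou
  have hfatou : ENNReal.ofReal K ≤
      Filter.liminf (fun k => ENNReal.ofReal K - B k) atTop := by
    have h1 : ∫⁻ x, ENNReal.ofReal K * ENNReal.ofReal (φ |v x|) ∂μ
        = ENNReal.ofReal K := by
      rw [lintegral_const_mul' _ _ ENNReal.ofReal_ne_top]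
      have e2 : (∫⁻ x, ENNReal.ofReal (φ |v x|) ∂μ) = 1 := hv1
      rw [e2, mul_one]
    calc ENNReal.ofReal K
        = ∫⁻ x, ENNReal.ofReal K * ENNReal.ofReal (φ |v x|) ∂μ := h1.symm
      _ = ∫⁻ x, Filter.liminf
            (fun k => A k x - ENNReal.ofReal (φ |w k x - v x|)) atTop ∂μ := by
          apply lintegral_congr_ae
          filter_upwards [haelim] with x hx
          exact hx.liminf_eq.symm
      _ ≤ Filter.liminf
            (fun k => ∫⁻ x, (A k x - ENNReal.ofReal (φ |w k x - v x|)) ∂μ) atTop :=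
          lintegral_liminf_le fun k => (hAmeas k).sub (hBmeas k)
      _ = Filter.liminf (fun k => ENNReal.ofReal K - B k) atTop := by
          apply Filter.liminf_congr
          exact Filter.Eventually.of_forall fun k => hsub k
  -- conclude B → 0
  have hgoal : Tendsto B atTop (nhds 0) := by
    rw [ENNReal.tendsto_nhds_zero]
    intro ε hε
    by_cases hεK : ENNReal.ofReal K ≤ ε
    · exact Filter.Eventually.of_forall fun k => (hBle k).trans hεK
    · push_neg at hεK
      have hKpos : (0:ℝ≥0∞) < ENNReal.ofReal K := ENNReal.ofReal_pos.2 hK0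
      have hlt : ENNReal.ofReal K - ε <
          Filter.liminf (fun k => ENNReal.ofReal K - B k) atTop :=
        lt_of_lt_of_le (ENNReal.sub_lt_self ENNReal.ofReal_lt_top.ne hKpos.ne' hε.ne')
          hfatou
      filter_upwards [Filter.eventually_lt_of_lt_liminf hlt] with k hk
      by_contra hcon
      push_neg at hcon
      exact absurd (hk.trans_le (tsub_le_tsub_left hcon.le _)) (lt_irrefl _)
  exact hgoal

end KKAux

/-- Kadec–Klee property for convergence in measure of (commutative) Orlicz spaces:
if `φ ∈ Δ₂`, `‖f_n‖_φ → ‖f‖_φ` and `f_n → f` in measure, then `‖f_n - f‖_φ → 0`. -/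
theorem kadec_klee_orlicz
    {X : Type*} [MeasurableSpace X] (μ : Measure X) (φ : ℝ → ℝ)
    (hconv : ConvexOn ℝ (Set.Ici 0) φ)
    (hmono : MonotoneOn φ (Set.Ici 0))
    (hcont : ContinuousOn φ (Set.Ici 0))
    (h0 : φ 0 = 0)
    (hpos : ∀ α : ℝ, 0 < α → 0 < φ α)
    (htop : Filter.Tendsto φ Filter.atTop Filter.atTop)
    (hΔ2 : ∃ k > 0, ∀ u > 0, φ (2 * u) ≤ k * φ u)
    (f : X → ℝ) (fn : ℕ → X → ℝ)
    (hf : MemOrlicz φ μ f) (hfn : ∀ n, MemOrlicz φ μ (fn n))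
    (hnorm : Tendsto (fun n => luxemburgNorm φ μ (fn n)) atTop
      (nhds (luxemburgNorm φ μ f)))
    (hmeas : ∀ ε > (0 : ℝ),
      Tendsto (fun n => μ {x | ε < |fn n x - f x|}) atTop (nhds 0)) :
    Tendsto (fun n => luxemburgNorm φ μ (fun x => fn n x - f x)) atTop (nhds 0) := by
  classical
  obtain ⟨k0, hk0, hk⟩ := hΔ2
  set K := max k0 1 with hKdef
  have hK1 : 1 ≤ K := le_max_right _ _
  have hKΔ : ∀ u, 0 ≤ u → φ (2 * u) ≤ K * φ u := by
    intro u hu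
    rcases hu.eq_or_lt with h | h
    · simp [← h, h0]
    · exact (hk u h).trans (mul_le_mul_of_nonneg_right (le_max_left _ _)
        (kk_phi_nonneg hmono h0 hu))
  set a := luxemburgNorm φ μ f with ha
  rcases (kk_lux_nonneg (μ := μ) (φ := φ) f).eq_or_lt with ha0 | ha0
  · -- case ‖f‖ = 0 : then f = 0 a.e. and the claim follows from `hnorm`
    have hf0 : f =ᵐ[μ] 0 := by
      have hmod1 : ∀ lam : ℝ, 0 < lam →
          orliczModular φ μ (fun x => lam * f x) ≤ 1 := by
        intro lam hlam
        have h1 : luxemburgNorm φ μ f < 1 / lam := by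
          rw [← ha0]; positivity
        have h2 := kk_lux_lt_imp hconv hmono h0 hK1 hKΔ hf (by positivity) h1
        have heq : (fun x => f x / (1/lam)) = fun x => lam * f x := by
          funext x
          rw [div_div_eq_mul_div, div_one, mul_comm]
        rwa [heq] at h2
      have hnull : ∀ δ : ℝ, 0 < δ → μ {x | δ < |f x|} = 0 := by
        intro δ hδ
        have hbound : ∀ n : ℕ, μ {x | δ < |f x|} ≤
            (ENNReal.ofReal (φ (((n:ℝ)+1) * δ)))⁻¹ := by
          intro n
          have hlam : (0:ℝ) < (n:ℝ)+1 := by positivity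
          have hle1 := hmod1 ((n:ℝ)+1) hlam
          have hsub : {x | δ < |f x|} ⊆
              {x | ENNReal.ofReal (φ (((n:ℝ)+1) * δ)) ≤
                ENNReal.ofReal (φ |((n:ℝ)+1) * f x|)} := by
            intro x hx
            simp only [Set.mem_setOf_eq] at hx ⊢
            apply ENNReal.ofReal_le_ofReal
            apply hmono (Set.mem_Ici.2 (by positivity)) (Set.mem_Ici.2 (abs_nonneg _))
            rw [abs_mul, abs_of_pos hlam]
            exact mul_le_mul_of_nonneg_left hx.le hlam.le
          have hmarkov := mul_meas_ge_le_lintegral₀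
            (μ := μ) (f := fun x => ENNReal.ofReal (φ |((n:ℝ)+1) * f x|))
            ((kk_mod_meas hcont (measurable_const.mul hf.1)).aemeasurable)
            (ENNReal.ofReal (φ (((n:ℝ)+1) * δ)))
          have h2 : ENNReal.ofReal (φ (((n:ℝ)+1) * δ)) * μ {x | δ < |f x|} ≤ 1 := by
            calc ENNReal.ofReal (φ (((n:ℝ)+1) * δ)) * μ {x | δ < |f x|}
                ≤ ENNReal.ofReal (φ (((n:ℝ)+1) * δ)) *
                  μ {x | ENNReal.ofReal (φ (((n:ℝ)+1) * δ)) ≤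
                    ENNReal.ofReal (φ |((n:ℝ)+1) * f x|)} := by
                  exact mul_le_mul_right (measure_mono hsub) _
              _ ≤ ∫⁻ x, ENNReal.ofReal (φ |((n:ℝ)+1) * f x|) ∂μ := hmarkov
              _ ≤ 1 := hle1
          rw [mul_comm] at h2
          rwa [← ENNReal.le_inv_iff_mul_le] at h2
        have htend : Tendsto (fun n : ℕ => (ENNReal.ofReal (φ (((n:ℝ)+1) * δ)))⁻¹) atTop
            (nhds 0) := by
          have h1 : Tendsto (fun n : ℕ => ((n:ℝ)+1) * δ) atTop atTop :=
            Tendsto.atTop_mul_const hδ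
              (tendsto_atTop_add_const_right atTop 1 tendsto_natCast_atTop_atTop)
          have h2 : Tendsto (fun n : ℕ => ENNReal.ofReal (φ (((n:ℝ)+1) * δ))) atTop
              (nhds ⊤) := ENNReal.tendsto_ofReal_atTop.comp (htop.comp h1)
          have h3 := ENNReal.tendsto_inv_iff.2 h2
          simpa using h3
        have hle0 := ge_of_tendsto htend (Filter.Eventually.of_forall hbound)
        exact le_antisymm hle0 zero_le
      have hU : {x | f x ≠ 0} ⊆ ⋃ m : ℕ, {x | 1/((m:ℝ)+1) < |f x|} := by
        intro x hx
        simp only [Set.mem_setOf_eq] at hx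
        obtain ⟨m, hm⟩ := exists_nat_one_div_lt (abs_pos.2 hx)
        exact Set.mem_iUnion.2 ⟨m, hm⟩
      have : μ {x | f x ≠ 0} = 0 :=
        le_antisymm
          (le_trans (measure_mono hU)
            (le_of_eq (measure_iUnion_null fun m => hnull _ (by positivity))))
          zero_le
      exact this
    have hcongr : ∀ n, luxemburgNorm φ μ (fun x => fn n x - f x) =
        luxemburgNorm φ μ (fn n) := by
      intro n
      apply kk_lux_congr_ae
      filter_upwards [hf0] with x hx
      simp [hx]
    have h2 : Tendsto (fun n => luxemburgNorm φ μ (fn n)) atTop (nhds 0) := by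
      rw [ha0]; exact hnorm
    exact Tendsto.congr (fun n => (hcongr n).symm) h2
  · -- case ‖f‖ = a > 0
    apply Filter.tendsto_of_subseq_tendsto
    intro ns hns
    -- convergence in measure of the subsequence
    have htim : TendstoInMeasure μ (fun k => fn (ns k)) atTop f := by
      rw [tendstoInMeasure_iff_dist]
      intro ε hε
      have hup : ∀ k, μ {x | ε ≤ dist (fn (ns k) x) (f x)} ≤
          μ {x | ε/2 < |fn (ns k) x - f x|} := by
        intro k
        apply measure_mono
        intro x hx
        simp only [Set.mem_setOf_eq, Real.dist_eq] at hx ⊢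
        linarith
      have hto : Tendsto (fun k => μ {x | ε/2 < |fn (ns k) x - f x|}) atTop (nhds 0) :=
        (hmeas (ε/2) (by positivity)).comp hns
      exact tendsto_of_tendsto_of_tendsto_of_le_of_le tendsto_const_nhds hto
        (fun k => zero_le) hup
    obtain ⟨ms, hms_mono, hae⟩ := htim.exists_seq_tendsto_ae
    refine ⟨ms, ?_⟩
    set g : ℕ → X → ℝ := fun j => fn (ns (ms j)) with hgdef
    set b : ℕ → ℝ := fun j => luxemburgNorm φ μ (g j) with hbdef
    have hb : Tendsto b atTop (nhds a) :=
      hnorm.comp (hns.comp hms_mono.tendsto_atTop)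
    have hbev : ∀ᶠ j in atTop, b j ∈ Set.Ioo (a/2) (a+1) :=
      hb (Ioo_mem_nhds (by linarith) (by linarith))
    set v : X → ℝ := fun x => f x / a with hvdef
    have hv1 : orliczModular φ μ v = 1 :=
      kk_norm_modular_eq_one hconv hmono hcont h0 hK1 hKΔ hf ha0
    set vk : ℕ → X → ℝ := fun j x => g j x / b j with hvkdef
    have hvk1 : ∀ᶠ j in atTop, orliczModular φ μ (vk j) = 1 := by
      filter_upwards [hbev] with j hj
      exact kk_norm_modular_eq_one hconv hmono hcont h0 hK1 hKΔ (hfn _)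
        (lt_trans (by linarith : (0:ℝ) < a/2) hj.1)
    have hvae : ∀ᵐ x ∂μ, Tendsto (fun j => vk j x) atTop (nhds (v x)) := by
      filter_upwards [hae] with x hx
      exact hx.div hb ha0.ne'
    obtain ⟨N, hN⟩ := eventually_atTop.1 (hbev.and hvk1)
    have hshift_ae : ∀ᵐ x ∂μ, Tendsto (fun i => vk (i + N) x) atTop (nhds (v x)) := by
      filter_upwards [hvae] with x hx
      exact hx.comp (tendsto_add_atTop_nat N)
    have hBL0 := kk_brezis_lieb hconv hmono hcont h0 hK1 hKΔ
      (w := fun i => vk (i + N)) (v := v)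
      (fun i => ((hfn _).1.div_const _)) (hf.1.div_const _)
      (fun i => (hN (i + N) (Nat.le_add_left N i)).2) hv1 hshift_ae
    have hBL : Tendsto (fun j => orliczModular φ μ (fun x => vk j x - v x)) atTop
        (nhds 0) := (tendsto_add_atTop_iff_nat N).1 hBL0
    -- the master modular claim
    have hmod : ∀ lam : ℝ, 0 < lam →
        Tendsto (fun j => orliczModular φ μ (fun x => lam * (g j x - f x))) atTop
          (nhds 0) := by
      intro lam hlam
      obtain ⟨m, hm⟩ := pow_unbounded_of_one_lt (2 * (lam * (a + 1))) (one_lt_two (α := ℝ))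
      set t : ℕ → ℝ := fun j => 2 * (lam * (b j - a)) with htdef
      have ht0 : Tendsto t atTop (nhds 0) := by
        have h1 : Tendsto (fun j => 2 * (lam * (b j - a))) atTop
            (nhds (2 * (lam * (a - a)))) :=
          ((hb.sub tendsto_const_nhds).const_mul lam).const_mul 2
        simpa using h1
      have htabs : Tendsto (fun j => |t j|) atTop (nhds 0) := by
        have h1 := ht0.abs
        simpa using h1
      have hev1 : ∀ᶠ j in atTop, |t j| ≤ 1 := by
        filter_upwards [(tendsto_order.1 htabs).2 1 one_pos] with j hj
        exact hj.le
      -- eventual domination of the modular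
      have hkey : ∀ᶠ j in atTop, orliczModular φ μ (fun x => lam * (g j x - f x)) ≤
          (ENNReal.ofReal K) ^ m * orliczModular φ μ (fun x => vk j x - v x)
            + ENNReal.ofReal |t j| := by
        filter_upwards [hbev, hev1] with j hj hj1
        have hbj0 : (0:ℝ) < b j := lt_trans (by linarith) hj.1
        have hfun : (fun x => lam * (g j x - f x)) =
            fun x => (lam * b j) * (vk j x - v x) + (lam * (b j - a)) * v x := by
          funext x
          simp only [hvkdef, hvdef]
          have ha' : a ≠ 0 := ha0.ne'
          field_simp
          ring
        rw [hfun]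
        calc orliczModular φ μ
              (fun x => (lam * b j) * (vk j x - v x) + (lam * (b j - a)) * v x)
            ≤ orliczModular φ μ (fun x => 2 * ((lam * b j) * (vk j x - v x)))
              + orliczModular φ μ (fun x => 2 * ((lam * (b j - a)) * v x)) := by
              apply kk_mod_add hconv hmono hcont h0
              exact measurable_const.mul (((hfn _).1.div_const _).sub (hf.1.div_const _))
          _ ≤ (ENNReal.ofReal K) ^ m * orliczModular φ μ (fun x => vk j x - v x)
              + ENNReal.ofReal |t j| := by
              gcongr
              · -- first term
                calc orliczModular φ μ (fun x => 2 * ((lam * b j) * (vk j x - v x)))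
                    ≤ orliczModular φ μ (fun x => 2 ^ m * (vk j x - v x)) := by
                      apply kk_mod_mono hmono
                      intro x
                      have e1 : |2 * (lam * b j * (vk j x - v x))|
                          = (2 * (lam * b j)) * |vk j x - v x| := by
                        rw [show (2:ℝ) * (lam * b j * (vk j x - v x))
                            = (2 * (lam * b j)) * (vk j x - v x) by ring,
                          abs_mul, abs_of_pos (by positivity)]
                      have e2 : |(2:ℝ) ^ m * (vk j x - v x)| = 2 ^ m * |vk j x - v x| := by
                        rw [abs_mul, abs_of_pos (by positivity : (0:ℝ) < 2 ^ m)]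
                      rw [e1, e2]
                      apply mul_le_mul_of_nonneg_right _ (abs_nonneg _)
                      nlinarith [hj.2, hm]
                  _ ≤ (ENNReal.ofReal K) ^ m *
                      orliczModular φ μ (fun x => vk j x - v x) :=
                      kk_mod_pow hmono h0 hK1 hKΔ m _
              · -- second term
                have hfun2 : (fun x => 2 * ((lam * (b j - a)) * v x)) =
                    fun x => t j * v x := by
                  funext x
                  simp only [htdef]
                  ring
                rw [hfun2]
                calc orliczModular φ μ (fun x => t j * v x)
                    ≤ ENNReal.ofReal |t j| * orliczModular φ μ v :=
                      kk_mod_small hconv h0 hj1 v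
                  _ = ENNReal.ofReal |t j| := by rw [hv1, mul_one]
      -- RHS tends to zero
      have hrhs : Tendsto (fun j =>
          (ENNReal.ofReal K) ^ m * orliczModular φ μ (fun x => vk j x - v x)
            + ENNReal.ofReal |t j|) atTop (nhds 0) := by
        have h1 : Tendsto (fun j =>
            (ENNReal.ofReal K) ^ m * orliczModular φ μ (fun x => vk j x - v x)) atTop
            (nhds ((ENNReal.ofReal K) ^ m * 0)) :=
          ENNReal.Tendsto.const_mul hBL (Or.inr (pow_ne_top ENNReal.ofReal_ne_top))
        rw [mul_zero] at h1
        have h2 : Tendsto (fun j => ENNReal.ofReal |t j|) atTop (nhds 0) := by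
          have := (ENNReal.continuous_ofReal.tendsto 0).comp htabs
          rw [ENNReal.ofReal_zero] at this
          exact this
        have := h1.add h2
        simpa using this
      exact tendsto_of_tendsto_of_tendsto_of_le_of_le' tendsto_const_nhds hrhs
        (Filter.Eventually.of_forall fun j => zero_le) hkey
    -- conclude the norm convergence along the sub-subsequence
    show Tendsto (fun j => luxemburgNorm φ μ (fun x => g j x - f x)) atTop (nhds 0)
    rw [tendsto_order]
    constructor
    · intro c hc
      exact Filter.Eventually.of_forall fun j =>
        lt_of_lt_of_le hc (kk_lux_nonneg _)
    · intro c hc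
      have h1 := hmod (2/c) (by positivity)
      have h2 : ∀ᶠ j in atTop,
          orliczModular φ μ (fun x => (2/c) * (g j x - f x)) < 1 :=
        (tendsto_order.1 h1).2 1 one_pos
      filter_upwards [h2] with j hj
      have hle : luxemburgNorm φ μ (fun x => g j x - f x) ≤ c/2 := by
        apply kk_lux_le (by positivity)
        have heq : (fun x => (g j x - f x)/(c/2)) =
            fun x => (2/c) * (g j x - f x) := by
          funext x
          rw [div_div_eq_mul_div]
          ring
        rw [heq]
        exact hj.le
      linarith
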